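/- Let p(x) = (1/Z) exp(−Σ_{c ∈ C} E_c(x_c)) be a Gibbs distribution on finite variables indexed by V with potentials normalized with respect to zero, where each clique c with nonzero potential is a clique of graph G. Let A ⊆ V and q a clique with q ⊆ A. If A satisfies the Strong LAP condition for q in G, then in the unique zero-normalized Gibbs representation of the marginal distribution p_A(x_A) = Σ_{x_{V\A}} p(x), the potential for q equals E_q. -/

import Mathlib

/-- Path connectivity with respect to `V \ A`. -/
def RelPathConn {V : Type*} (G : SimpleGraph V) (A : Set V) (i j : V) : Prop :=
  ∃ w : G.Walk i j, w.IsPath ∧ w.support.tail.dropLast ≠ [] ∧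
    ∀ v ∈ w.support.tail.dropLast, v ∉ A

/-- The Strong LAP condition for a clique `q` and a set `A` with `q ⊆ A`. -/
def StrongLAP {V : Type*} (G : SimpleGraph V) (A q : Set V) : Prop :=
  q ⊆ A ∧ ∃ i ∈ q, ∃ j ∈ q, i ≠ j ∧ ¬ RelPathConn G A i j

section Aux

set_option linter.unusedSectionVars false

/-- Alternating-sign cancellation over a powerset, when `g` is insensitive to `k`. -/
lemma aux_cancel {V : Type*} [DecidableEq V] (q : Finset V) (k : V) (hk : k ∈ q)
    (g : Finset V → ℝ) (hg : ∀ t ⊆ q.erase k, g (insert k t) = g t) :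
    ∑ s ∈ q.powerset, (-1 : ℝ) ^ ((q \ s).card) * g s = 0 := by
  have hq : q = insert k (q.erase k) := (Finset.insert_erase hk).symm
  rw [hq, Finset.sum_powerset_insert (Finset.notMem_erase k q), ← Finset.sum_add_distrib]
  apply Finset.sum_eq_zero
  intro t ht
  rw [Finset.mem_powerset] at ht
  have hkt : k ∉ t := fun h => Finset.notMem_erase k q (ht h)
  have h1 : (insert k (q.erase k)) \ insert k t = q.erase k \ t := by
    ext v
    simp only [Finset.mem_sdiff, Finset.mem_insert, Finset.mem_erase]
    constructor
    · rintro ⟨h, h2⟩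
      rcases h with rfl | h
      · exact absurd (Or.inl rfl) h2
      · exact ⟨h, fun hv => h2 (Or.inr hv)⟩
    · rintro ⟨⟨hne, hv⟩, h2⟩
      exact ⟨Or.inr ⟨hne, hv⟩, fun hh => hh.elim hne (h2 ·)⟩
  have h2 : (insert k (q.erase k)) \ t = insert k (q.erase k \ t) := by
    ext v
    simp only [Finset.mem_sdiff, Finset.mem_insert, Finset.mem_erase]
    constructor
    · rintro ⟨h, h2⟩
      rcases h with rfl | h
      · exact Or.inl rfl
      · exact Or.inr ⟨h, h2⟩
    · rintro (rfl | ⟨⟨hne, hv⟩, h2⟩)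
      · exact ⟨Or.inl rfl, hkt⟩
      · exact ⟨Or.inr ⟨hne, hv⟩, h2⟩
  have hkn : k ∉ q.erase k \ t := fun h => Finset.notMem_erase k q (Finset.mem_sdiff.1 h).1
  rw [h1, h2, Finset.card_insert_of_notMem hkn, hg t ht, pow_succ]
  ring

/-- Möbius inversion: the alternating sum of a zero-normalized Gibbs sum recovers
the potential of `q`. -/
lemma aux_moebius {V : Type*} [Fintype V] [DecidableEq V] (X : V → Type*)
    [∀ v, DecidableEq (X v)] (z x : ∀ v, X v)
    (H : Finset V → (∀ v, X v) → ℝ)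
    (hloc : ∀ c a b, (∀ v ∈ c, a v = b v) → H c a = H c b)
    (hnorm : ∀ (c : Finset V) a, (∃ t ∈ c, a t = z t) → H c a = 0)
    (𝒞 : Finset (Finset V)) (q : Finset V) (hq : q ∈ 𝒞) :
    ∑ s ∈ q.powerset, (-1 : ℝ) ^ ((q \ s).card) *
      ∑ c ∈ 𝒞, H c (fun v => if v ∈ s then x v else z v) = H q x := by
  simp_rw [Finset.mul_sum]
  rw [Finset.sum_comm]
  rw [Finset.sum_eq_single q]
  · rw [Finset.sum_eq_single q]
    · rw [Finset.sdiff_self, Finset.card_empty, pow_zero, one_mul]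
      exact hloc q _ x (fun v hv => if_pos hv)
    · intro s hs hsne
      rw [Finset.mem_powerset] at hs
      obtain ⟨t, htq, hts⟩ : ∃ t ∈ q, t ∉ s := by
        by_contra h
        push_neg at h
        exact hsne (Finset.Subset.antisymm hs h)
      rw [hnorm q _ ⟨t, htq, if_neg hts⟩, mul_zero]
    · intro h
      exact absurd (Finset.mem_powerset.2 Finset.Subset.rfl) h
  · intro c hc hcne
    by_cases hcq : c ⊆ q
    · obtain ⟨k, hkq, hkc⟩ : ∃ k ∈ q, k ∉ c := by
        by_contra h
        push_neg at h
        exact hcne (Finset.Subset.antisymm hcq h)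
      exact aux_cancel q k hkq _ (fun t _ => hloc c _ _ (fun v hv => by
        have : v ≠ k := fun h => hkc (h ▸ hv)
        simp [Finset.mem_insert, this]))
    · apply Finset.sum_eq_zero
      intro s hs
      rw [Finset.mem_powerset] at hs
      obtain ⟨t, htc, htq⟩ : ∃ t ∈ c, t ∉ q := by
        by_contra h
        push_neg at h
        exact hcq h
      rw [hnorm c _ ⟨t, htc, if_neg (fun h => htq (hs h))⟩, mul_zero]
  · intro h
    exact absurd hq h

lemma walk_edges_of_support_singleton {V : Type*} {G : SimpleGraph V} {a c : V}
    (P : G.Walk a c) (h : P.support.length = 1) : P.edges = [] := by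
  cases P with
  | nil => simp
  | cons h' P' =>
    rw [SimpleGraph.Walk.support_cons, List.length_cons] at h
    exact absurd (List.length_eq_zero_iff.1 (by omega)) P'.support_ne_nil

lemma walk_edges_of_support_pair {V : Type*} {G : SimpleGraph V} {a c : V}
    (P : G.Walk a c) (h : P.support = [a, c]) : P.edges = [s(a, c)] := by
  cases P with
  | nil => simp at h
  | cons h' P' =>
    rw [SimpleGraph.Walk.support_cons] at h
    have h2 : P'.support = [c] := by simpa using h
    rename_i bb
    have hb : bb = c := by
      have := P'.support_eq_cons
      rw [h2] at this
      exact (List.cons_eq_cons.1 this.symm).1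
    subst hb
    rw [SimpleGraph.Walk.edges_cons,
      walk_edges_of_support_singleton P' (by rw [h2]; rfl)]

lemma aux_noreach {V : Type*} [DecidableEq V] (G : SimpleGraph V) (A : Set V) (i j : V)
    (hi : i ∈ A) (hj : j ∈ A) (hij : i ≠ j) (hn : ¬ RelPathConn G A i j)
    (b : V) (hb : b ∉ A) (w : G.Walk i b) (hw : ∀ u ∈ w.support.tail, u ∉ A)
    (hadj : G.Adj b j) : False := by
  classical
  set W : G.Walk i j := w.append (SimpleGraph.Walk.cons hadj SimpleGraph.Walk.nil) with hW
  have hWsupp : W.support = i :: (w.support.tail ++ [j]) := by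
    rw [hW, SimpleGraph.Walk.support_append, w.support_eq_cons]
    simp
    conv_lhs => rw [w.support_eq_cons]
    rfl
  have hWedges : W.edges = w.edges ++ [s(b, j)] := by
    rw [hW, SimpleGraph.Walk.edges_append]
    simp
  set P : G.Walk i j := W.bypass with hP
  have hPpath : P.IsPath := W.bypass_isPath
  have hPsub : P.support ⊆ W.support := W.support_bypass_subset
  have hPedges : P.edges ⊆ W.edges := W.edges_bypass_subset
  have hPsupp : P.support = i :: P.support.tail := P.support_eq_cons
  have htail_ne : P.support.tail ≠ [] := by
    intro h
    have hlen := SimpleGraph.Walk.length_support P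
    rw [hPsupp, h] at hlen
    simp at hlen
    have : P.Nil := by simpa using hlen
    exact hij this.eq
  have hgl : P.support.tail.getLast htail_ne = j := by
    have h1 : P.support.getLast P.support_ne_nil = j := P.getLast_support
    rwa [List.getLast_congr _ (List.cons_ne_nil _ _) hPsupp, List.getLast_cons htail_ne] at h1
  have htail_eq : P.support.tail.dropLast ++ [j] = P.support.tail := by
    have h2 := List.dropLast_append_getLast htail_ne
    rwa [hgl] at h2
  have hnodup : P.support.Nodup := hPpath.support_nodup
  have hinotail : i ∉ P.support.tail := by
    rw [hPsupp] at hnodup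
    exact (List.nodup_cons.1 hnodup).1
  have hjno : j ∉ P.support.tail.dropLast := by
    have h2 : P.support.tail.Nodup := by
      rw [hPsupp] at hnodup
      exact (List.nodup_cons.1 hnodup).2
    rw [← htail_eq] at h2
    have := List.disjoint_of_nodup_append h2
    exact fun h => this h (by simp)
  by_cases hdl : P.support.tail.dropLast = []
  · have hsupp2 : P.support = [i, j] := by
      rw [hPsupp, ← htail_eq, hdl]
      simp
    have hije : s(i, j) ∈ W.edges := by
      apply hPedges
      rw [walk_edges_of_support_pair P hsupp2]
      simp
    rw [hWedges, List.mem_append] at hije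
    rcases hije with hije | hije
    · have : j ∈ w.support := w.snd_mem_support_of_mem_edges hije
      rw [w.support_eq_cons] at this
      rcases List.mem_cons.1 this with h | h
      · exact hij h.symm
      · exact hw j h hj
    · simp only [List.mem_singleton, Sym2.eq_iff] at hije
      rcases hije with ⟨rfl, _⟩ | ⟨rfl, _⟩
      · exact hb hi
      · exact hij rfl
  · apply hn
    refine ⟨P, hPpath, hdl, fun v hv => ?_⟩
    have hvt : v ∈ P.support.tail := List.mem_of_mem_dropLast hv
    have hvW : v ∈ W.support := hPsub (by rw [hPsupp]; exact List.mem_cons_of_mem _ hvt)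
    rw [hWsupp] at hvW
    rcases List.mem_cons.1 hvW with rfl | hvW
    · exact absurd hvt hinotail
    · rcases List.mem_append.1 hvW with h | h
      · exact hw v h
      · simp only [List.mem_singleton] at h
        exact absurd (h ▸ hv) hjno

noncomputable section TTsec

variable {V : Type*} [Fintype V] [DecidableEq V] (X : V → Type*)
  [∀ v, Fintype (X v)] [∀ v, DecidableEq (X v)]

/-- Glue a configuration on `A` with one on the complement. -/
def glueD (A : Finset V) (u : ∀ v, X v) (b : ∀ w : {w : V // w ∉ A}, X w.1) :
    ∀ v, X v := fun v => if h : v ∈ A then u v else b ⟨v, h⟩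

/-- Partial partition function: sum over configurations outside `A`. -/
def TT (A : Finset V) (E : Finset V → (∀ v, X v) → ℝ) (𝒞 : Finset (Finset V))
    (u : ∀ v, X v) : ℝ :=
  ∑ b : ∀ w : {w : V // w ∉ A}, X w.1, Real.exp (-∑ c ∈ 𝒞, E c (glueD X A u b))

lemma aux_split (A : Finset V) (f : (∀ v, X v) → ℝ) (u : ∀ v, X v) :
    (∑ y : ∀ v, X v, if ∀ v ∈ A, y v = u v then f y else 0)
    = ∑ b : ∀ w : {w : V // w ∉ A}, X w.1, f (glueD X A u b) := by
  classical
  set e := Equiv.piEquivPiSubtypeProd (fun v : V => v ∈ A) X with he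
  rw [← Equiv.sum_comp e.symm (fun y => if ∀ v ∈ A, y v = u v then f y else 0)]
  rw [Fintype.sum_prod_type]
  have key : ∀ (a : ∀ v : {w : V // w ∈ A}, X v.1) (b : ∀ v : {w : V // ¬ w ∈ A}, X v.1),
      (if ∀ v ∈ A, e.symm (a, b) v = u v then f (e.symm (a, b)) else 0)
      = if a = (fun v : {w : V // w ∈ A} => u v.1) then f (e.symm (a, b)) else 0 := by
    intro a b
    apply if_congr _ rfl rfl
    constructor
    · intro h
      funext v
      have := h v.1 v.2
      rwa [he, Equiv.piEquivPiSubtypeProd_symm_apply, dif_pos v.2] at this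
    · intro h v hv
      rw [he, Equiv.piEquivPiSubtypeProd_symm_apply, dif_pos hv, h]
  simp_rw [key]
  rw [Finset.sum_eq_single (fun v : {w : V // w ∈ A} => u v.1)]
  · apply Finset.sum_congr rfl
    intro b _
    rw [if_pos rfl]
    exact congrArg f (funext fun v => by
      rw [he, Equiv.piEquivPiSubtypeProd_symm_apply]; rfl)
  · intro a _ ha
    exact Finset.sum_eq_zero fun b _ => if_neg ha
  · intro h
    exact absurd (Finset.mem_univ _) h

lemma TT_pos (A : Finset V) (E : Finset V → (∀ v, X v) → ℝ) (𝒞 : Finset (Finset V))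
    (z : ∀ v, X v) (u : ∀ v, X v) : 0 < TT X A E 𝒞 u := by
  haveI : Nonempty (∀ w : {w : V // w ∉ A}, X w.1) := ⟨fun w => z w.1⟩
  exact Finset.sum_pos (fun b _ => Real.exp_pos _) Finset.univ_nonempty

lemma TT_indep (A : Finset V) (E : Finset V → (∀ v, X v) → ℝ) (𝒞 : Finset (Finset V))
    (k : V) (hk : ∀ c ∈ 𝒞, ∀ y y', (∀ v, v ≠ k → y v = y' v) → E c y = E c y')
    (u u' : ∀ v, X v) (huu : ∀ v, v ≠ k → u v = u' v) :
    TT X A E 𝒞 u = TT X A E 𝒞 u' := by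
  unfold TT
  apply Finset.sum_congr rfl
  intro b _
  congr 1
  congr 1
  apply Finset.sum_congr rfl
  intro c hc
  apply hk c hc
  intro v hv
  unfold glueD
  by_cases h : v ∈ A
  · rw [dif_pos h, dif_pos h, huu v hv]
  · rw [dif_neg h, dif_neg h]

lemma TT_factor (A : Finset V) (E : Finset V → (∀ v, X v) → ℝ) (𝒞 : Finset (Finset V))
    (P : Finset V → Prop) [DecidablePred P] (S : V → Prop) [DecidablePred S]
    (h1 : ∀ c ∈ 𝒞, P c → ∀ y y', (∀ v, (v ∈ A ∨ S v) → y v = y' v) → E c y = E c y')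
    (h2 : ∀ c ∈ 𝒞, ¬ P c → ∀ y y', (∀ v, (v ∈ A ∨ ¬ S v) → y v = y' v) → E c y = E c y')
    (u : ∀ v, X v) :
    TT X A E (𝒞.filter P) u * TT X A E (𝒞.filter (fun c => ¬ P c)) u
      = (Fintype.card (∀ w : {w : V // w ∉ A}, X w.1) : ℝ) * TT X A E 𝒞 u := by
  classical
  set Y := ∀ w : {w : V // w ∉ A}, X w.1 with hY
  set mg : Y → Y → Y := fun a b w => if S w.1 then a w else b w with hmg
  have key : ∀ a b : Y,
      Real.exp (-∑ c ∈ 𝒞.filter P, E c (glueD X A u a)) *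
      Real.exp (-∑ c ∈ 𝒞.filter (fun c => ¬ P c), E c (glueD X A u b))
      = Real.exp (-∑ c ∈ 𝒞, E c (glueD X A u (mg a b))) := by
    intro a b
    rw [← Real.exp_add]
    congr 1
    have e1 : ∑ c ∈ 𝒞.filter P, E c (glueD X A u a)
        = ∑ c ∈ 𝒞.filter P, E c (glueD X A u (mg a b)) := by
      apply Finset.sum_congr rfl
      intro c hc
      rw [Finset.mem_filter] at hc
      apply h1 c hc.1 hc.2
      intro v hv
      unfold glueD
      by_cases h : v ∈ A
      · rw [dif_pos h, dif_pos h]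
      · rw [dif_neg h, dif_neg h, hmg]
        have hs : S v := hv.resolve_left h
        simp only [hs, if_pos]
    have e2 : ∑ c ∈ 𝒞.filter (fun c => ¬ P c), E c (glueD X A u b)
        = ∑ c ∈ 𝒞.filter (fun c => ¬ P c), E c (glueD X A u (mg a b)) := by
      apply Finset.sum_congr rfl
      intro c hc
      rw [Finset.mem_filter] at hc
      apply h2 c hc.1 hc.2
      intro v hv
      unfold glueD
      by_cases h : v ∈ A
      · rw [dif_pos h, dif_pos h]
      · rw [dif_neg h, dif_neg h, hmg]
        have hs : ¬ S v := hv.resolve_left h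
        simp only [hs, if_neg, if_false]
    rw [e1, e2, ← neg_add, Finset.sum_filter_add_sum_filter_not 𝒞 P]
  have inv : Function.Involutive (fun p : Y × Y => (mg p.1 p.2, mg p.2 p.1)) := by
    intro p
    ext w
    · simp only [hmg]
      by_cases h : S w.1 <;> simp [h]
    · simp only [hmg]
      by_cases h : S w.1 <;> simp [h]
  calc TT X A E (𝒞.filter P) u * TT X A E (𝒞.filter (fun c => ¬ P c)) u
      = ∑ a : Y, ∑ b : Y, Real.exp (-∑ c ∈ 𝒞.filter P, E c (glueD X A u a)) *
          Real.exp (-∑ c ∈ 𝒞.filter (fun c => ¬ P c), E c (glueD X A u b)) := by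
        rw [TT, TT, Finset.sum_mul_sum]
    _ = ∑ p : Y × Y, Real.exp (-∑ c ∈ 𝒞, E c (glueD X A u (mg p.1 p.2))) := by
        rw [Fintype.sum_prod_type]
        exact Finset.sum_congr rfl (fun a _ => Finset.sum_congr rfl (fun b _ => key a b))
    _ = ∑ p : Y × Y, Real.exp (-∑ c ∈ 𝒞, E c (glueD X A u p.1)) := by
        exact Equiv.sum_comp inv.toPerm
          (fun p : Y × Y => Real.exp (-∑ c ∈ 𝒞, E c (glueD X A u p.1)))
    _ = (Fintype.card Y : ℝ) * TT X A E 𝒞 u := by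
        rw [Fintype.sum_prod_type, TT, Finset.mul_sum]
        apply Finset.sum_congr rfl
        intro a _
        simp [Finset.sum_const, Finset.card_univ, nsmul_eq_mul]

end TTsec

end Aux

theorem strongLAP_marginal_potential
    {V : Type*} [Fintype V] [DecidableEq V] (X : V → Type*) [∀ v, Fintype (X v)]
    [∀ v, DecidableEq (X v)] (z : ∀ v, X v) (G : SimpleGraph V)
    (E : Finset V → (∀ v, X v) → ℝ)
    (hEloc : ∀ c x y, (∀ v ∈ c, x v = y v) → E c x = E c y)
    (hEnorm : ∀ (c : Finset V) x, (∃ t ∈ c, x t = z t) → E c x = 0)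
    (hEclique : ∀ c : Finset V, (∃ x, E c x ≠ 0) → G.IsClique (c : Set V))
    (Z : ℝ) (hZ : 0 < Z) (p : (∀ v, X v) → ℝ)
    (hp : ∀ x, p x = (1 / Z) * Real.exp (-∑ c : Finset V, E c x))
    (hsum : ∑ x, p x = 1)
    (A q : Finset V) (hq : G.IsClique (q : Set V)) (hqA : q ⊆ A)
    (hlap : StrongLAP G (A : Set V) (q : Set V))
    (F : Finset V → (∀ v, X v) → ℝ)
    (hFloc : ∀ c x y, (∀ v ∈ c, x v = y v) → F c x = F c y)
    (hFnorm : ∀ (c : Finset V) x, (∃ t ∈ c, x t = z t) → F c x = 0)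
    (hFsupp : ∀ c : Finset V, ¬ c ⊆ A → ∀ x, F c x = 0)
    (Z' : ℝ) (hZ' : 0 < Z')
    (hrep : ∀ x, (∑ y : ∀ v, X v, if ∀ v ∈ A, y v = x v then p y else 0) =
        (1 / Z') * Real.exp (-∑ c : Finset V, F c x)) :
    F q = E q := by
  classical
  obtain ⟨hqA', i, hiq, j, hjq, hij, hconn⟩ := hlap
  rw [Finset.mem_coe] at hiq hjq
  have hiA : i ∈ A := hqA hiq
  have hjA : j ∈ A := hqA hjq
  -- reachability from i through the complement of A
  set R : V → Prop := fun v => ∃ w : G.Walk i v, ∀ u ∈ w.support.tail, u ∉ A with hR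
  have hRi : R i := ⟨SimpleGraph.Walk.nil, by simp⟩
  have hRext : ∀ b v, R b → v ∉ A → G.Adj b v → R v := by
    rintro b v ⟨w, hw⟩ hvA hadj
    refine ⟨w.append (SimpleGraph.Walk.cons hadj SimpleGraph.Walk.nil), ?_⟩
    have hts : (w.append (SimpleGraph.Walk.cons hadj SimpleGraph.Walk.nil)).support.tail
        = w.support.tail ++ [v] := by
      rw [SimpleGraph.Walk.support_append, w.support_eq_cons]
      simp
    rw [hts]
    intro u hu
    rcases List.mem_append.1 hu with h | h
    · exact hw u h
    · simp only [List.mem_singleton] at h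
      exact h ▸ hvA
  set 𝒞A := Finset.univ.filter (fun c : Finset V => c ⊆ A) with h𝒞A
  set 𝒞B := Finset.univ.filter (fun c : Finset V => ¬ c ⊆ A) with h𝒞B
  set cls : Finset V → Prop := fun c => ∃ v ∈ c, v ∉ A ∧ R v with hcls
  -- the marginal formula
  have hmarg : ∀ u, (∑ y : ∀ v, X v, if ∀ v ∈ A, y v = u v then p y else 0)
      = (1 / Z) * Real.exp (-∑ c ∈ 𝒞A, E c u) * TT X A E 𝒞B u := by
    intro u
    rw [aux_split X A p u]
    unfold TT
    rw [Finset.mul_sum]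
    apply Finset.sum_congr rfl
    intro b _
    rw [hp]
    have hsplit : ∑ c : Finset V, E c (glueD X A u b)
        = (∑ c ∈ 𝒞A, E c (glueD X A u b)) + ∑ c ∈ 𝒞B, E c (glueD X A u b) :=
      (Finset.sum_filter_add_sum_filter_not Finset.univ _ _).symm
    have hEA : ∑ c ∈ 𝒞A, E c (glueD X A u b) = ∑ c ∈ 𝒞A, E c u := by
      apply Finset.sum_congr rfl
      intro c hc
      rw [h𝒞A, Finset.mem_filter] at hc
      exact hEloc c _ _ (fun v hv => by unfold glueD; rw [dif_pos (hc.2 hv)])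
    rw [hsplit, hEA, neg_add, Real.exp_add]
    ring
  -- logarithmic form
  have hTpos : ∀ 𝒞 u, 0 < TT X A E 𝒞 u := fun 𝒞 u => TT_pos X A E 𝒞 z u
  have hlog : ∀ u, -Real.log Z' - ∑ c : Finset V, F c u
      = -Real.log Z - (∑ c ∈ 𝒞A, E c u) + Real.log (TT X A E 𝒞B u) := by
    intro u
    have h1 : (1 / Z) * Real.exp (-∑ c ∈ 𝒞A, E c u) * TT X A E 𝒞B u
        = (1 / Z') * Real.exp (-∑ c : Finset V, F c u) :=
      (hmarg u).symm.trans (hrep u)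
    have h2 := congrArg Real.log h1
    rw [Real.log_mul (by positivity) (hTpos 𝒞B u).ne',
      Real.log_mul (by positivity) (Real.exp_ne_zero _),
      Real.log_mul (by positivity) (Real.exp_ne_zero _),
      Real.log_exp, Real.log_exp, one_div, one_div, Real.log_inv, Real.log_inv] at h2
    linarith
  -- classification of cliques not contained in A
  have hclsj : ∀ c ∈ 𝒞B, cls c → ∀ y y', (∀ v, v ≠ j → y v = y' v) → E c y = E c y' := by
    intro c hc hclsc y y' hyy
    by_cases hE0 : ∀ w, E c w = 0
    · rw [hE0, hE0]
    · push_neg at hE0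
      have hclq := hEclique c hE0
      obtain ⟨b, hbc, hbA, hRb⟩ := hclsc
      have hjc : j ∉ c := by
        intro hjc
        have hbj : b ≠ j := fun h => hbA (h ▸ hjA)
        have hadj : G.Adj b j := hclq (Finset.mem_coe.2 hbc) (Finset.mem_coe.2 hjc) hbj
        obtain ⟨w, hw⟩ := hRb
        exact aux_noreach G (↑A) i j (Finset.mem_coe.2 hiA) (Finset.mem_coe.2 hjA) hij hconn
          b (fun h => hbA (Finset.mem_coe.1 h)) w (fun u hu h => hw u hu (Finset.mem_coe.1 h)) hadj
      exact hEloc c y y' (fun v hv => hyy v (fun h => hjc (h ▸ hv)))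
  have hclsi : ∀ c ∈ 𝒞B, ¬ cls c → ∀ y y', (∀ v, v ≠ i → y v = y' v) → E c y = E c y' := by
    intro c hc hclsc y y' hyy
    by_cases hE0 : ∀ w, E c w = 0
    · rw [hE0, hE0]
    · push_neg at hE0
      have hclq := hEclique c hE0
      rw [h𝒞B, Finset.mem_filter] at hc
      obtain ⟨b, hbc, hbA⟩ := Finset.not_subset.1 hc.2
      have hic : i ∉ c := by
        intro hic
        have hbi : i ≠ b := fun h => hbA (h ▸ hiA)
        have hadj : G.Adj i b := hclq (Finset.mem_coe.2 hic) (Finset.mem_coe.2 hbc) hbi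
        exact hclsc ⟨b, hbc, hbA, hRext i b hRi hbA hadj⟩
      exact hEloc c y y' (fun v hv => hyy v (fun h => hic (h ▸ hv)))
  have hfac1 : ∀ c ∈ 𝒞B, cls c → ∀ y y',
      (∀ v, (v ∈ A ∨ (v ∉ A ∧ R v)) → y v = y' v) → E c y = E c y' := by
    intro c hc hclsc y y' hyy
    by_cases hE0 : ∀ w, E c w = 0
    · rw [hE0, hE0]
    · push_neg at hE0
      have hclq := hEclique c hE0
      obtain ⟨b, hbc, hbA, hRb⟩ := hclsc
      apply hEloc
      intro v hv
      apply hyy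
      by_cases hvA : v ∈ A
      · exact Or.inl hvA
      · refine Or.inr ⟨hvA, ?_⟩
        by_cases hvb : v = b
        · exact hvb ▸ hRb
        · have hadj : G.Adj b v :=
            hclq (Finset.mem_coe.2 hbc) (Finset.mem_coe.2 hv) (fun h => hvb h.symm)
          exact hRext b v hRb hvA hadj
  have hfac2 : ∀ c ∈ 𝒞B, ¬ cls c → ∀ y y',
      (∀ v, (v ∈ A ∨ ¬ (v ∉ A ∧ R v)) → y v = y' v) → E c y = E c y' := by
    intro c hc hclsc y y' hyy
    apply hEloc
    intro v hv
    apply hyy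
    by_cases hvA : v ∈ A
    · exact Or.inl hvA
    · exact Or.inr (fun h => hclsc ⟨v, hv, hvA, h.2⟩)
  -- log decomposition of TT over the two clique classes
  have hNpos : (0:ℝ) < (Fintype.card (∀ w : {w : V // w ∉ A}, X w.1) : ℝ) := by
    haveI : Nonempty (∀ w : {w : V // w ∉ A}, X w.1) := ⟨fun w => z w.1⟩
    exact_mod_cast Fintype.card_pos
  have hlogT : ∀ u, Real.log (TT X A E 𝒞B u)
      = Real.log (TT X A E (𝒞B.filter cls) u) +
        Real.log (TT X A E (𝒞B.filter (fun c => ¬ cls c)) u)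
        - Real.log ((Fintype.card (∀ w : {w : V // w ∉ A}, X w.1) : ℝ)) := by
    intro u
    have hf := TT_factor X A E 𝒞B cls (fun v => v ∉ A ∧ R v) hfac1 hfac2 u
    have h2 := congrArg Real.log hf
    rw [Real.log_mul (hTpos _ u).ne' (hTpos _ u).ne',
      Real.log_mul hNpos.ne' (hTpos _ u).ne'] at h2
    linarith
  -- apply the alternating-difference operator
  funext x
  have Czero : ∀ r : ℝ, ∑ s ∈ q.powerset, (-1:ℝ)^((q \ s).card) * r = 0 :=
    fun r => aux_cancel q i hiq (fun _ => r) (fun _ _ => rfl)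
  have A1 : ∑ s ∈ q.powerset, (-1:ℝ)^((q \ s).card) *
      ∑ c : Finset V, F c (fun v => if v ∈ s then x v else z v) = F q x :=
    aux_moebius X z x F hFloc hFnorm Finset.univ q (Finset.mem_univ q)
  have A2 : ∑ s ∈ q.powerset, (-1:ℝ)^((q \ s).card) *
      ∑ c ∈ 𝒞A, E c (fun v => if v ∈ s then x v else z v) = E q x :=
    aux_moebius X z x E hEloc hEnorm 𝒞A q
      (by rw [h𝒞A]; exact Finset.mem_filter.2 ⟨Finset.mem_univ q, hqA⟩)
  have A4a : ∑ s ∈ q.powerset, (-1:ℝ)^((q \ s).card) *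
      Real.log (TT X A E (𝒞B.filter cls) (fun v => if v ∈ s then x v else z v)) = 0 := by
    apply aux_cancel q j hjq
    intro t ht
    exact congrArg Real.log (TT_indep X A E _ j
      (fun c hc => hclsj c (Finset.mem_filter.1 hc).1 (Finset.mem_filter.1 hc).2)
      _ _ (fun v hv => by simp [Finset.mem_insert, hv]))
  have A4b : ∑ s ∈ q.powerset, (-1:ℝ)^((q \ s).card) *
      Real.log (TT X A E (𝒞B.filter (fun c => ¬ cls c))
        (fun v => if v ∈ s then x v else z v)) = 0 := by
    apply aux_cancel q i hiq
    intro t ht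
    exact congrArg Real.log (TT_indep X A E _ i
      (fun c hc => hclsi c (Finset.mem_filter.1 hc).1 (Finset.mem_filter.1 hc).2)
      _ _ (fun v hv => by simp [Finset.mem_insert, hv]))
  have A4 : ∑ s ∈ q.powerset, (-1:ℝ)^((q \ s).card) *
      Real.log (TT X A E 𝒞B (fun v => if v ∈ s then x v else z v)) = 0 := by
    have e : ∀ s ∈ q.powerset, (-1:ℝ)^((q \ s).card) *
        Real.log (TT X A E 𝒞B (fun v => if v ∈ s then x v else z v))
        = (-1:ℝ)^((q \ s).card) *
            Real.log (TT X A E (𝒞B.filter cls) (fun v => if v ∈ s then x v else z v))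
          + (-1:ℝ)^((q \ s).card) *
            Real.log (TT X A E (𝒞B.filter (fun c => ¬ cls c))
              (fun v => if v ∈ s then x v else z v))
          - (-1:ℝ)^((q \ s).card) *
            Real.log ((Fintype.card (∀ w : {w : V // w ∉ A}, X w.1) : ℝ)) := by
      intro s _
      rw [hlogT]
      ring
    rw [Finset.sum_congr rfl e, Finset.sum_sub_distrib, Finset.sum_add_distrib,
      A4a, A4b, Czero]
    ring
  have Hsum : ∑ s ∈ q.powerset, (-1:ℝ)^((q \ s).card) *
      (-Real.log Z' - ∑ c : Finset V, F c (fun v => if v ∈ s then x v else z v))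
      = ∑ s ∈ q.powerset, (-1:ℝ)^((q \ s).card) *
      (-Real.log Z - (∑ c ∈ 𝒞A, E c (fun v => if v ∈ s then x v else z v))
        + Real.log (TT X A E 𝒞B (fun v => if v ∈ s then x v else z v))) :=
    Finset.sum_congr rfl (fun s _ => by rw [hlog])
  have L : ∑ s ∈ q.powerset, (-1:ℝ)^((q \ s).card) *
      (-Real.log Z' - ∑ c : Finset V, F c (fun v => if v ∈ s then x v else z v))
      = -(F q x) := by
    have e : ∀ s ∈ q.powerset, (-1:ℝ)^((q \ s).card) *
        (-Real.log Z' - ∑ c : Finset V, F c (fun v => if v ∈ s then x v else z v))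
        = (-1:ℝ)^((q \ s).card) * (-Real.log Z')
          - (-1:ℝ)^((q \ s).card) *
            ∑ c : Finset V, F c (fun v => if v ∈ s then x v else z v) :=
      fun s _ => by ring
    rw [Finset.sum_congr rfl e, Finset.sum_sub_distrib, Czero, A1]
    ring
  have Rr : ∑ s ∈ q.powerset, (-1:ℝ)^((q \ s).card) *
      (-Real.log Z - (∑ c ∈ 𝒞A, E c (fun v => if v ∈ s then x v else z v))
        + Real.log (TT X A E 𝒞B (fun v => if v ∈ s then x v else z v)))
      = -(E q x) := by
    have e : ∀ s ∈ q.powerset, (-1:ℝ)^((q \ s).card) *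
        (-Real.log Z - (∑ c ∈ 𝒞A, E c (fun v => if v ∈ s then x v else z v))
          + Real.log (TT X A E 𝒞B (fun v => if v ∈ s then x v else z v)))
        = (-1:ℝ)^((q \ s).card) * (-Real.log Z)
          - (-1:ℝ)^((q \ s).card) *
            (∑ c ∈ 𝒞A, E c (fun v => if v ∈ s then x v else z v))
          + (-1:ℝ)^((q \ s).card) *
            Real.log (TT X A E 𝒞B (fun v => if v ∈ s then x v else z v)) :=
      fun s _ => by ring
    rw [Finset.sum_congr rfl e, Finset.sum_add_distrib, Finset.sum_sub_distrib,
      Czero, A2, A4]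
    ring
  rw [L, Rr] at Hsum
  linarith
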